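/- For every LP^MLN program 𝔽 over 𝒫 and all interpretations Y ⊆ X ⊆ 𝒫, the following are equivalent: (a) ⟨Y, X⟩ is a soft HT model of 𝔽; (d) the interpretation Y' ∪ X of 𝒫 ∪ 𝒫' satisfies Δ_{𝒫'}(𝔽̄_X); (e) the interpretation Y' ∪ X of 𝒫 ∪ 𝒫' satisfies Δ_{𝒫'}({𝔽̄}^ch). -/

import Mathlib

namespace LPMLN

/-- Propositional formulas over a set of atoms `P`, built from atoms and `⊥`
using `∧`, `∨`, `→`. -/
inductive Formula (P : Type) : Type where
  | atom : P → Formula P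
  | bot  : Formula P
  | and  : Formula P → Formula P → Formula P
  | or   : Formula P → Formula P → Formula P
  | imp  : Formula P → Formula P → Formula P
deriving DecidableEq

variable {P : Type} [DecidableEq P]

/-- `¬F` abbreviates `F → ⊥`. -/
def Formula.neg (F : Formula P) : Formula P := .imp F .bot

/-- Classical evaluation of a formula in an interpretation `X ⊆ P`. -/
def Formula.eval (X : Finset P) : Formula P → Bool
  | .atom p => decide (p ∈ X)
  | .bot => false
  | .and F G => F.eval X && G.eval X
  | .or F G => F.eval X || G.eval X
  | .imp F G => !(F.eval X) || G.eval X

/-- Classical satisfaction `X ⊨ F`. -/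
def Formula.sat (X : Finset P) (F : Formula P) : Prop := F.eval X = true

/-- The reduct `F^X`: every maximal subformula not satisfied by `X` is replaced by `⊥`. -/
def Formula.reduct (X : Finset P) : Formula P → Formula P
  | .atom p => if p ∈ X then .atom p else .bot
  | .bot => .bot
  | .and F G => if (Formula.and F G).eval X then .and (F.reduct X) (G.reduct X) else .bot
  | .or F G => if (Formula.or F G).eval X then .or (F.reduct X) (G.reduct X) else .bot
  | .imp F G => if (Formula.imp F G).eval X then .imp (F.reduct X) (G.reduct X) else .bot

/-- `X` satisfies a (finite) set of formulas. -/
def satSet (X : Finset P) (Γ : Finset (Formula P)) : Prop := ∀ F ∈ Γ, F.sat X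

/-- The reduct `Γ^X` of a finite set of formulas. -/
def reductSet (X : Finset P) (Γ : Finset (Formula P)) : Finset (Formula P) :=
  Γ.image (Formula.reduct X)

/-- `X` is a stable model of `Γ` if `X ⊨ Γ^X` and no proper subset of `X` satisfies `Γ^X`. -/
def StableModel (Γ : Finset (Formula P)) (X : Finset P) : Prop :=
  satSet X (reductSet X Γ) ∧ ∀ Y, Y ⊂ X → ¬ satSet Y (reductSet X Γ)

/-- A weight is a real number (soft) or the symbol `α` (hard). -/
inductive Weight : Type where
  | soft : ℝ → Weight
  | hard : Weight

noncomputable instance : DecidableEq Weight := Classical.decEq _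

/-- An LP^MLN program: a finite set of weighted formulas `w : R`. -/
abbrev Program (P : Type) [DecidableEq P] := Finset (Weight × Formula P)

/-- `𝔽_X`: the weighted formulas of `𝔽` whose formula is satisfied by `X`. -/
noncomputable def progSat (𝔽 : Program P) (X : Finset P) : Program P :=
  𝔽.filter (fun r => r.2.eval X = true)

/-- `𝔽̄`: the formulas of `𝔽`, with weights dropped. -/
noncomputable def formulas (𝔽 : Program P) : Finset (Formula P) := 𝔽.image Prod.snd

/-- `X` is a soft stable model of `𝔽` (i.e. `X ∈ SM[𝔽]`) if `X` is a stable model of `𝔽̄_X`. -/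
def SoftStable (𝔽 : Program P) (X : Finset P) : Prop :=
  StableModel (formulas (progSat 𝔽 X)) X

/-- w-expressions: either zero or a formal expression `e^{c₁ + c₂·α}` with `c₁ : ℝ`, `c₂ : ℤ`. -/
inductive WExpr : Type where
  | zero : WExpr
  | exp : ℝ → ℤ → WExpr

/-- Multiplication of w-expressions: add exponents componentwise; zero is absorbing. -/
def WExpr.mul : WExpr → WExpr → WExpr
  | .zero, _ => .zero
  | _, .zero => .zero
  | .exp a b, .exp c d => .exp (a + c) (b + d)

/-- Inverse of a w-expression: negate both exponents. -/
def WExpr.inv : WExpr → WExpr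
  | .zero => .zero
  | .exp a b => .exp (-a) (-b)

/-- Evaluation of a w-expression at a real number `a`. -/
noncomputable def WExpr.eval (a : ℝ) : WExpr → ℝ
  | .zero => 0
  | .exp c₁ c₂ => Real.exp (c₁ + c₂ * a)

/-- The real contribution of a weight (hard rules contribute `0` to the soft sum). -/
def softWeight : Weight → ℝ
  | .soft r => r
  | .hard => 0

/-- Sum of the weights of the soft rules of `𝔽`. -/
noncomputable def softSum (𝔽 : Program P) : ℝ := ∑ r ∈ 𝔽, softWeight r.1

/-- The number of hard rules of `𝔽`. -/
noncomputable def hardCount (𝔽 : Program P) : ℤ :=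
  ((𝔽.filter (fun r => r.1 = Weight.hard)).card : ℤ)

/-- `TW(𝔽) = e^{c₁ + c₂·α}` where `c₁` is the sum of the soft weights and
`c₂` the number of hard rules. -/
noncomputable def TW (𝔽 : Program P) : WExpr := .exp (softSum 𝔽) (hardCount 𝔽)

open Classical in
/-- `W_𝔽(X) = TW(𝔽_X)` if `X ∈ SM[𝔽]`, and zero otherwise. -/
noncomputable def W (𝔽 : Program P) (X : Finset P) : WExpr :=
  if SoftStable 𝔽 X then TW (progSat 𝔽 X) else .zero

open Classical in
/-- `W^pnt_𝔽(X) = TW(𝔽 \ 𝔽_X)⁻¹` if `X ∈ SM[𝔽]`, and zero otherwise. -/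
noncomputable def Wpnt (𝔽 : Program P) (X : Finset P) : WExpr :=
  if SoftStable 𝔽 X then (TW (𝔽 \ progSat 𝔽 X)).inv else .zero

/-- `P_𝔽(X)`: the limit as `a → ∞` of the normalized evaluation of `W_𝔽(X)`. -/
noncomputable def Pr [Fintype P] (𝔽 : Program P) (X : Finset P) : ℝ :=
  Filter.limUnder Filter.atTop
    (fun a : ℝ => (W 𝔽 X).eval a / ∑ Y : Finset P, (W 𝔽 Y).eval a)

/-- `P^pnt_𝔽(X)`: the limit as `a → ∞` of the normalized evaluation of `W^pnt_𝔽(X)`. -/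
noncomputable def PrPnt [Fintype P] (𝔽 : Program P) (X : Finset P) : ℝ :=
  Filter.limUnder Filter.atTop
    (fun a : ℝ => (Wpnt 𝔽 X).eval a / ∑ Y : Finset P, (Wpnt 𝔽 Y).eval a)

/-- Weak equivalence: the same probability distribution. -/
def WeakEquiv [Fintype P] (𝔽 𝔾 : Program P) : Prop :=
  ∀ X : Finset P, Pr 𝔽 X = Pr 𝔾 X

/-- Strong equivalence of LP^MLN programs. -/
def StrongEquiv [Fintype P] (𝔽 𝔾 : Program P) : Prop :=
  ∀ (ℍ : Program P) (X : Finset P), Pr (𝔽 ∪ ℍ) X = Pr (𝔾 ∪ ℍ) X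

/-- Structural equivalence of LP^MLN programs. -/
def StructEquiv (𝔽 𝔾 : Program P) : Prop :=
  ∀ (ℍ : Program P) (X : Finset P), SoftStable (𝔽 ∪ ℍ) X ↔ SoftStable (𝔾 ∪ ℍ) X

/-- HT satisfaction `⟨Y,X⟩ ⊨ₕₜ F` (at the world "here"). -/
def htSat (Y X : Finset P) : Formula P → Prop
  | .atom p => p ∈ Y
  | .bot => False
  | .and F G => htSat Y X F ∧ htSat Y X G
  | .or F G => htSat Y X F ∨ htSat Y X G
  | .imp F G => (htSat Y X F → htSat Y X G) ∧ (Formula.imp F G).sat X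

/-- `⟨Y,X⟩` is an HT model of a set `Γ` of formulas. -/
def HTModel (Γ : Finset (Formula P)) (Y X : Finset P) : Prop :=
  Y ⊆ X ∧ ∀ F ∈ Γ, htSat Y X F

/-- `⟨Y,X⟩` is a soft HT model of an LP^MLN program `𝔽`. -/
def SoftHT (𝔽 : Program P) (Y X : Finset P) : Prop :=
  Y ⊆ X ∧ ∀ r ∈ progSat 𝔽 X, htSat Y X r.2

/-- The choice formula `{F}^ch = F ∨ ¬F`. -/
def Formula.ch (F : Formula P) : Formula P := .or F F.neg

/-- `{Γ}^ch`, choice formulas of a set of formulas. -/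
def chSet (Γ : Finset (Formula P)) : Finset (Formula P) := Γ.image Formula.ch

/-- Renaming of atoms. -/
def Formula.rename {Q : Type} (f : P → Q) : Formula P → Formula Q
  | .atom p => .atom (f p)
  | .bot => .bot
  | .and F G => .and (F.rename f) (G.rename f)
  | .or F G => .or (F.rename f) (G.rename f)
  | .imp F G => .imp (F.rename f) (G.rename f)

/-- `Δ_{𝒫'}(F)`, a formula over `𝒫 ∪ 𝒫'`; unprimed atoms are `Sum.inl p`,
primed atoms `p'` are `Sum.inr p`. -/
def Formula.delta : Formula P → Formula (P ⊕ P)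
  | .atom p => .atom (Sum.inr p)
  | .bot => .bot
  | .and F G => .and F.delta G.delta
  | .or F G => .or F.delta G.delta
  | .imp F G => .and (.imp F.delta G.delta)
      (.imp (F.rename Sum.inl) (G.rename Sum.inl))

/-- `Δ_{𝒫'}(Γ)` for a set of formulas. -/
def deltaSet (Γ : Finset (Formula P)) : Finset (Formula (P ⊕ P)) :=
  Γ.image Formula.delta

/-- The interpretation `Y' ∪ X` of `𝒫 ∪ 𝒫'`. -/
def primedInterp (Y X : Finset P) : Finset (P ⊕ P) :=
  X.image Sum.inl ∪ Y.image Sum.inr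


lemma mem_primed_inl {Y X : Finset P} (p : P) :
    (Sum.inl p ∈ primedInterp Y X) ↔ p ∈ X := by
  simp [primedInterp]

lemma mem_primed_inr {Y X : Finset P} (p : P) :
    (Sum.inr p ∈ primedInterp Y X) ↔ p ∈ Y := by
  simp [primedInterp]

lemma eval_rename_inl (Y X : Finset P) (F : Formula P) :
    (F.rename Sum.inl).eval (primedInterp Y X) = F.eval X := by
  induction F with
  | atom p => simp [Formula.rename, Formula.eval, mem_primed_inl]
  | bot => rfl
  | and F G ihF ihG => simp [Formula.rename, Formula.eval, ihF, ihG]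
  | or F G ihF ihG => simp [Formula.rename, Formula.eval, ihF, ihG]
  | imp F G ihF ihG => simp [Formula.rename, Formula.eval, ihF, ihG]

lemma eval_imp_iff {Q : Type} [DecidableEq Q] (Z : Finset Q) (F G : Formula Q) :
    ((Formula.imp F G).eval Z = true) ↔ (F.eval Z = true → G.eval Z = true) := by
  cases hF : F.eval Z <;> simp [Formula.eval, hF]

lemma eval_delta (Y X : Finset P) (F : Formula P) :
    (F.delta.eval (primedInterp Y X) = true) ↔ htSat Y X F := by
  induction F with
  | atom p => simp [Formula.delta, Formula.eval, htSat, mem_primed_inr]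
  | bot => simp [Formula.delta, Formula.eval, htSat]
  | and F G ihF ihG => simp [Formula.delta, Formula.eval, htSat, ihF, ihG]
  | or F G ihF ihG => simp [Formula.delta, Formula.eval, htSat, ihF, ihG]
  | imp F G ihF ihG =>
    show ((Formula.and (.imp F.delta G.delta)
        (.imp (F.rename Sum.inl) (G.rename Sum.inl))).eval (primedInterp Y X) = true) ↔ _
    simp only [Formula.eval, Bool.and_eq_true]
    rw [show (!Formula.eval (primedInterp Y X) F.delta ||
          Formula.eval (primedInterp Y X) G.delta) =
        (Formula.imp F.delta G.delta).eval (primedInterp Y X) from rfl,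
      show (!Formula.eval (primedInterp Y X) (F.rename Sum.inl) ||
          Formula.eval (primedInterp Y X) (G.rename Sum.inl)) =
        (Formula.imp (F.rename Sum.inl) (G.rename Sum.inl)).eval (primedInterp Y X) from rfl,
      eval_imp_iff, eval_imp_iff, ihF, ihG, eval_rename_inl, eval_rename_inl]
    simp only [htSat, Formula.sat, eval_imp_iff]

lemma ht_persist {Y X : Finset P} (hYX : Y ⊆ X) (F : Formula P) :
    htSat Y X F → F.sat X := by
  induction F with
  | atom p => intro h; simpa [Formula.sat, Formula.eval] using hYX h
  | bot => intro h; exact h.elim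
  | and F G ihF ihG =>
    intro h; simp only [Formula.sat, Formula.eval, Bool.and_eq_true]
    exact ⟨ihF h.1, ihG h.2⟩
  | or F G ihF ihG =>
    intro h; simp only [Formula.sat, Formula.eval, Bool.or_eq_true]
    exact h.elim (fun h => Or.inl (ihF h)) (fun h => Or.inr (ihG h))
  | imp F G ihF ihG => intro h; exact h.2

/-- for `Y ⊆ X`, the following are equivalent: (a) `⟨Y,X⟩` is a soft HT model
of `𝔽`; (d) `Y' ∪ X ⊨ Δ_{𝒫'}(𝔽̄_X)`; (e) `Y' ∪ X ⊨ Δ_{𝒫'}({𝔽̄}^ch)`. -/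
theorem stmt16 {P : Type} [DecidableEq P] (𝔽 : Program P) (Y X : Finset P) (hYX : Y ⊆ X) :
    (SoftHT 𝔽 Y X ↔ satSet (primedInterp Y X) (deltaSet (formulas (progSat 𝔽 X)))) ∧
    (satSet (primedInterp Y X) (deltaSet (formulas (progSat 𝔽 X))) ↔
      satSet (primedInterp Y X) (deltaSet (chSet (formulas 𝔽)))) := by
  have hd : satSet (primedInterp Y X) (deltaSet (formulas (progSat 𝔽 X))) ↔
      ∀ r ∈ 𝔽, r.2.eval X = true → htSat Y X r.2 := by
    constructor
    · intro h r hr hev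
      have : r.2.delta ∈ deltaSet (formulas (progSat 𝔽 X)) := by
        simp only [deltaSet, formulas, progSat, Finset.mem_image, Finset.mem_filter]
        exact ⟨r.2, ⟨r, ⟨hr, hev⟩, rfl⟩, rfl⟩
      exact (eval_delta Y X r.2).1 (h _ this)
    · intro h G hG
      simp only [deltaSet, formulas, progSat, Finset.mem_image, Finset.mem_filter] at hG
      obtain ⟨F, ⟨r, ⟨hr, hev⟩, rfl⟩, rfl⟩ := hG
      exact (eval_delta Y X r.2).2 (h r hr hev)
  constructor
  · rw [hd]
    constructor
    · intro h r hr hev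
      exact h.2 r (Finset.mem_filter.2 ⟨hr, hev⟩)
    · intro h
      refine ⟨hYX, fun r hr => ?_⟩
      rw [progSat, Finset.mem_filter] at hr
      exact h r hr.1 hr.2
  · rw [hd]
    have hch : ∀ F : Formula P,
        (F.ch.delta.eval (primedInterp Y X) = true) ↔ (F.eval X = true → htSat Y X F) := by
      intro F
      have := eval_delta Y X F.ch
      rw [this]
      simp only [Formula.ch, Formula.neg, htSat, Formula.sat, Formula.eval,
        Bool.or_eq_true, Bool.not_eq_true']
      constructor
      · rintro (h | h)
        · exact fun _ => h
        · intro hev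
          rcases h.2 with h2 | h2
          · rw [hev] at h2; exact absurd h2 (by simp)
          · exact absurd h2 (by simp)
      · intro h
        by_cases hev : F.eval X = true
        · exact Or.inl (h hev)
        · refine Or.inr ⟨fun hF => hev (ht_persist hYX F hF), Or.inl ?_⟩
          simpa using hev
    constructor
    · intro h G hG
      simp only [deltaSet, chSet, formulas, Finset.mem_image] at hG
      obtain ⟨F, ⟨F', ⟨r, hr, rfl⟩, rfl⟩, rfl⟩ := hG
      exact (hch r.2).2 (h r hr)
    · intro h r hr hev
      have : r.2.ch.delta ∈ deltaSet (chSet (formulas 𝔽)) := by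
        simp only [deltaSet, chSet, formulas, Finset.mem_image]
        exact ⟨r.2.ch, ⟨r.2, ⟨r, hr, rfl⟩, rfl⟩, rfl⟩
      exact (hch r.2).1 (h _ this) hev

end LPMLN
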